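/- Let a < b be real numbers, let f be continuous on [a,b], and let w ∈ C²([a,b]) satisfy w > 0 on [a,b] and w″ = f on [a,b]. Then for every convex function v ∈ C²([a,b]) with v(a) = v(b) = 0 one has ∫_a^b f v dx + w(b) v′(b) − w(a) v′(a) ≥ (min_{[a,b]} w) · (v′(b) − v′(a)). -/

import Mathlib

open scoped Topology
open Set

noncomputable section

/-- The key inequality in the forward direction of the one-dimensional
properness result: if `w > 0` solves `w'' = f` on `[a,b]`, then for every convex
`C²` function `v` vanishing at the endpoints,
`∫_a^b f v + w(b) v'(b) − w(a) v'(a) ≥ (min_{[a,b]} w) (v'(b) − v'(a))`. -/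
theorem one_dim_properness_inequality
    (a b : ℝ) (hab : a < b)
    (f : ℝ → ℝ) (hf : ContinuousOn f (Icc a b))
    (w : ℝ → ℝ) (hw : ContDiffOn ℝ 2 w (Icc a b))
    (hwpos : ∀ x ∈ Icc a b, 0 < w x)
    (hwf : ∀ x ∈ Icc a b, iteratedDerivWithin 2 w (Icc a b) x = f x)
    (v : ℝ → ℝ) (hv : ContDiffOn ℝ 2 v (Icc a b))
    (hvcvx : ConvexOn ℝ (Icc a b) v)
    (hva : v a = 0) (hvb : v b = 0) :
    (∫ x in a..b, f x * v x) + w b * derivWithin v (Icc a b) b -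
        w a * derivWithin v (Icc a b) a ≥
      sInf (w '' Icc a b) *
        (derivWithin v (Icc a b) b - derivWithin v (Icc a b) a) := by
  set s := Icc a b with hs_def
  have hs : UniqueDiffOn ℝ s := uniqueDiffOn_Icc hab
  set v' := derivWithin v s with hv'_def
  set w' := derivWithin w s with hw'_def
  set v'' := iteratedDerivWithin 2 v s with hv''_def
  -- basic regularity
  have honetwo : (1 : WithTop ℕ∞) + 1 ≤ 2 := by norm_num
  have hv'c : ContDiffOn ℝ 1 v' s := hv.derivWithin hs honetwo
  have hw'c : ContDiffOn ℝ 1 w' s := hw.derivWithin hs honetwo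
  have hvcont : ContinuousOn v s := hv.continuousOn
  have hwcont : ContinuousOn w s := hw.continuousOn
  have hv''cont : ContinuousOn v'' s :=
    hv.continuousOn_iteratedDerivWithin (by norm_num) hs
  -- second derivatives as derivatives of first derivatives
  have hsecond : ∀ {u : ℝ → ℝ}, ContDiffOn ℝ 2 u s → ∀ x ∈ s,
      iteratedDerivWithin 2 u s x = derivWithin (derivWithin u s) s x := by
    intro u hu x hx
    rw [show (2 : ℕ) = 1 + 1 from rfl, iteratedDerivWithin_succ]
    exact derivWithin_congr (fun y hy => congrFun iteratedDerivWithin_one y)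
      (congrFun iteratedDerivWithin_one x)
  -- HasDerivAt statements on the interior
  have hmem : ∀ x ∈ Ioo a b, s ∈ 𝓝 x := fun x hx => Icc_mem_nhds hx.1 hx.2
  have hvD : ∀ x ∈ Ioo a b, HasDerivAt v (v' x) x := fun x hx =>
    ((hv.differentiableOn two_ne_zero x (Ioo_subset_Icc_self hx)).hasDerivWithinAt).hasDerivAt
      (hmem x hx)
  have hwD : ∀ x ∈ Ioo a b, HasDerivAt w (w' x) x := fun x hx =>
    ((hw.differentiableOn two_ne_zero x (Ioo_subset_Icc_self hx)).hasDerivWithinAt).hasDerivAt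
      (hmem x hx)
  have hv'D : ∀ x ∈ Ioo a b, HasDerivAt v' (v'' x) x := by
    intro x hx
    have hdw : DifferentiableWithinAt ℝ v' s x :=
      hv'c.differentiableOn one_ne_zero x (Ioo_subset_Icc_self hx)
    have := hdw.hasDerivWithinAt.hasDerivAt (hmem x hx)
    rwa [hv''_def, hsecond hv x (Ioo_subset_Icc_self hx)]
  have hw'D : ∀ x ∈ Ioo a b, HasDerivAt w' (f x) x := by
    intro x hx
    have hdw : DifferentiableWithinAt ℝ w' s x :=
      hw'c.differentiableOn one_ne_zero x (Ioo_subset_Icc_self hx)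
    have := hdw.hasDerivWithinAt.hasDerivAt (hmem x hx)
    rwa [← hsecond hw x (Ioo_subset_Icc_self hx), hwf x (Ioo_subset_Icc_self hx)] at this
  -- nonnegativity of v''
  have hmono : MonotoneOn v' s :=
    hvcvx.monotoneOn_derivWithin (hv.differentiableOn two_ne_zero)
  have hnonnegIoo : ∀ x ∈ Ioo a b, 0 ≤ v'' x := by
    intro x hx
    have hg := hasDerivAt_iff_tendsto_slope.1 (hv'D x hx)
    refine ge_of_tendsto hg ?_
    filter_upwards [mem_nhdsWithin_of_mem_nhds (isOpen_Ioo.mem_nhds hx),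
      self_mem_nhdsWithin] with y hy hy'
    have hy'' : y ≠ x := hy'
    rw [slope_def_field]
    rcases lt_or_gt_of_ne hy'' with h | h
    · apply div_nonneg_of_nonpos
      · simpa using hmono (Ioo_subset_Icc_self hy) (Ioo_subset_Icc_self hx) h.le
      · linarith
    · apply div_nonneg
      · simpa using hmono (Ioo_subset_Icc_self hx) (Ioo_subset_Icc_self hy) h.le
      · linarith
  have hnonneg : ∀ x ∈ s, 0 ≤ v'' x := by
    intro x hx
    have hcl : x ∈ closure (Ioo a b) := by
      rw [closure_Ioo hab.ne]; exact hx
    have hne : (𝓝[Ioo a b] x).NeBot := mem_closure_iff_nhdsWithin_neBot.1 hcl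
    have htend : Filter.Tendsto v'' (𝓝[Ioo a b] x) (𝓝 (v'' x)) :=
      ((hv''cont x hx).mono Ioo_subset_Icc_self)
    refine ge_of_tendsto htend ?_
    filter_upwards [self_mem_nhdsWithin] with y hy using hnonnegIoo y hy
  -- integrability
  have huIcc : uIcc a b = Icc a b := uIcc_of_le hab.le
  have hint_fv : IntervalIntegrable (fun x => f x * v x) MeasureTheory.volume a b := by
    apply ContinuousOn.intervalIntegrable; rw [huIcc]; exact hf.mul hvcont
  have hint_wv'' : IntervalIntegrable (fun x => w x * v'' x) MeasureTheory.volume a b := by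
    apply ContinuousOn.intervalIntegrable; rw [huIcc]; exact hwcont.mul hv''cont
  have hint_v'' : IntervalIntegrable v'' MeasureTheory.volume a b := by
    apply ContinuousOn.intervalIntegrable; rw [huIcc]; exact hv''cont
  -- FTC 1: ∫ (f v - w v'') = F b - F a with F = w' v - w v'
  have hFTC1 : ∫ x in a..b, (f x * v x - w x * v'' x)
      = (w' b * v b - w b * v' b) - (w' a * v a - w a * v' a) := by
    apply intervalIntegral.integral_eq_sub_of_hasDerivAt_of_le hab.le
    · exact ((hw'c.continuousOn.mul hvcont).sub (hwcont.mul hv'c.continuousOn))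
    · intro x hx
      have := ((hw'D x hx).mul (hvD x hx)).sub ((hwD x hx).mul (hv'D x hx))
      convert this using 1
      · rfl
      ring
    · exact hint_fv.sub hint_wv''
  -- FTC 2: ∫ v'' = v' b - v' a
  have hFTC2 : ∫ x in a..b, v'' x = v' b - v' a := by
    apply intervalIntegral.integral_eq_sub_of_hasDerivAt_of_le hab.le
      hv'c.continuousOn hv'D hint_v''
  have hsplit : (∫ x in a..b, f x * v x) + w b * v' b - w a * v' a
      = ∫ x in a..b, w x * v'' x := by
    have := intervalIntegral.integral_sub hint_fv hint_wv''
    rw [hFTC1, hva, hvb] at this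
    linarith [this]
  rw [hsplit]
  -- the inequality
  set m := sInf (w '' s) with hm_def
  have hcpt : IsCompact (w '' s) := isCompact_Icc.image_of_continuousOn hwcont
  have hbdd : BddBelow (w '' s) := hcpt.bddBelow
  have hm_le : ∀ x ∈ s, m ≤ w x := fun x hx => csInf_le hbdd (mem_image_of_mem w hx)
  have hmono_int : ∫ x in a..b, m * v'' x ≤ ∫ x in a..b, w x * v'' x := by
    apply intervalIntegral.integral_mono_on hab.le
    · exact (hint_v''.const_mul m)
    · exact hint_wv''
    · intro x hx
      exact mul_le_mul_of_nonneg_right (hm_le x hx) (hnonneg x hx)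
  calc m * (v' b - v' a) = ∫ x in a..b, m * v'' x := by
        rw [intervalIntegral.integral_const_mul, hFTC2]
      _ ≤ ∫ x in a..b, w x * v'' x := hmono_int
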